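/- Let n ≥ 4 be even and let Δ be the distance squared matrix of the cycle graph C_n. For each integer j with 1 ≤ j ≤ n, let v_j ∈ ℂ^n be the vector with entries (v_j)_k = ω^{jk} for k = 0,…,n−1, where ω = exp(2πi/n). Then Δ v_j = λ_j v_j, where λ_j = 2·(−1)^j · ( n²/8 + Σ_{i=1}^{n/2 − 1} i² · cos( (n − 2i)πj / n ) ). In particular the eigenvalues of Δ are exactly λ_1,…,λ_n. -/

import Mathlib

open Matrix

/-- The distance squared matrix of a graph. -/
noncomputable def distSqMatrix {V : Type*} [Fintype V] (G : SimpleGraph V) :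
    Matrix V V ℝ := Matrix.of fun i j => ((G.dist i j : ℝ)) ^ 2

/-- number of positive eigenvalues (with multiplicity) of a real symmetric matrix -/
noncomputable def iPos {V : Type*} [Fintype V] [DecidableEq V] (M : Matrix V V ℝ) : ℕ :=
  if h : M.IsHermitian then (Finset.univ.filter fun i => 0 < h.eigenvalues i).card else 0

/-- number of negative eigenvalues (with multiplicity) of a real symmetric matrix -/
noncomputable def iNeg {V : Type*} [Fintype V] [DecidableEq V] (M : Matrix V V ℝ) : ℕ :=
  if h : M.IsHermitian then (Finset.univ.filter fun i => h.eigenvalues i < 0).card else 0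

/-- multiplicity of 0 as an eigenvalue of a real symmetric matrix -/
noncomputable def iZero {V : Type*} [Fintype V] [DecidableEq V] (M : Matrix V V ℝ) : ℕ :=
  if h : M.IsHermitian then (Finset.univ.filter fun i => h.eigenvalues i = 0).card else 0
/-- the graph distance between vertices `i` and `j` of the cycle `C_n`:
`min (|i-j|, n - |i-j|)`. -/
def cycDist (n : ℕ) (i j : Fin n) : ℕ :=
  min (((i : ℤ) - (j : ℤ)).natAbs) (n - ((i : ℤ) - (j : ℤ)).natAbs)

/-- the distance squared matrix of the cycle `C_n` (as a real matrix) -/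
noncomputable def cycleDistSq (n : ℕ) : Matrix (Fin n) (Fin n) ℝ :=
  Matrix.of fun i j => ((cycDist n i j : ℝ)) ^ 2

/-- the distance squared matrix of the cycle `C_n` (as a complex matrix) -/
noncomputable def cycleDistSqC (n : ℕ) : Matrix (Fin n) (Fin n) ℂ :=
  Matrix.of fun i j => ((cycDist n i j : ℂ)) ^ 2

lemma cycDist_zero {n : ℕ} [NeZero n] (m : Fin n) :
    cycDist n 0 m = min (m : ℕ) (n - m) := by
  simp [cycDist]

lemma cycDist_shift {n : ℕ} [NeZero n] (i k : Fin n) :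
    cycDist n i k = cycDist n 0 (k - i) := by
  rw [cycDist_zero]
  have hi : (i : ℕ) < n := i.isLt
  have hk : (k : ℕ) < n := k.isLt
  have hsub : ((k - i : Fin n) : ℕ) = ((k : ℕ) + (n - i)) % n := by
    rw [Fin.sub_def]; simp [Nat.add_comm]
  unfold cycDist
  rcases le_total (i : ℕ) (k : ℕ) with h | h
  · have h1 : (((i : ℤ)) - (k : ℤ)).natAbs = (k : ℕ) - (i : ℕ) := by omega
    have h2 : ((k : ℕ) + (n - i)) % n = (k : ℕ) - (i : ℕ) := by
      have : (k : ℕ) + (n - i) = ((k : ℕ) - (i : ℕ)) + n := by omega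
      rw [this, Nat.add_mod_right, Nat.mod_eq_of_lt (by omega)]
    rw [h1, hsub, h2]
  · have h1 : (((i : ℤ)) - (k : ℤ)).natAbs = (i : ℕ) - (k : ℕ) := by omega
    rcases eq_or_lt_of_le h with h' | h'
    · have hki : k = i := Fin.ext (by omega)
      subst hki
      simp [h1, sub_self]
    · have h2 : ((k : ℕ) + (n - i)) % n = n - ((i : ℕ) - (k : ℕ)) := by
        rw [Nat.mod_eq_of_lt (by omega)]; omega
      rw [h1, hsub, h2]
      omega

open Real in
lemma key_sum {n : ℕ} [NeZero n] (hn : 4 ≤ n) (heven : Even n) (j : ℕ) :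
    ∑ m : Fin n, ((cycDist n 0 m : ℂ)) ^ 2 *
        (Complex.exp (2 * (π : ℂ) * Complex.I / n)) ^ (j * (m : ℕ)) =
      ((2 * (-1) ^ j * ((n : ℝ) ^ 2 / 8 + ∑ i ∈ Finset.Icc 1 (n / 2 - 1),
          (i : ℝ) ^ 2 * Real.cos (((n : ℝ) - 2 * i) * π * j / n)) : ℝ) : ℂ) := by
  obtain ⟨h, hn2⟩ := heven
  have hn2 : n = 2 * h := by omega
  have hh : 2 ≤ h := by omega
  have hnR : (n : ℝ) ≠ 0 := by positivity
  have hnC : (n : ℂ) ≠ 0 := by exact_mod_cast Nat.cast_ne_zero.mpr (by omega)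
  set ω : ℂ := Complex.exp (2 * (π : ℂ) * Complex.I / n) with hω
  -- basic powers of ω
  have hω_pow : ∀ a : ℕ, ω ^ a = Complex.exp ((a : ℂ) * (2 * (π : ℂ) * Complex.I / n)) := by
    intro a; rw [Complex.exp_nat_mul]
  have hω_n : ω ^ n = 1 := by
    rw [hω_pow]
    have : (n : ℂ) * (2 * (π : ℂ) * Complex.I / n) = 2 * π * Complex.I := by
      field_simp
    rw [this, Complex.exp_two_pi_mul_I]
  have hω_h : ω ^ h = -1 := by
    rw [hω_pow]
    have : (h : ℂ) * (2 * (π : ℂ) * Complex.I / n) = π * Complex.I := by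
      have hhC : (h : ℂ) ≠ 0 := Nat.cast_ne_zero.mpr (by omega)
      rw [hn2]; push_cast; field_simp
    rw [this, Complex.exp_pi_mul_I]
  -- pair identity
  have hpair : ∀ i : ℕ, i ≤ n → ω ^ (j * i) + ω ^ (j * (n - i)) =
      2 * ((Real.cos (2 * π * j * i / n) : ℝ) : ℂ) := by
    intro i hi
    have e1 : ((j * i : ℕ) : ℂ) * (2 * (π : ℂ) * Complex.I / n) =
        ((2 * π * j * i / n : ℝ) : ℂ) * Complex.I := by
      push_cast; field_simp
    have e2 : ((j * (n - i) : ℕ) : ℂ) * (2 * (π : ℂ) * Complex.I / n) =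
        (j : ℂ) * (2 * π * Complex.I) + (-((2 * π * j * i / n : ℝ) : ℂ)) * Complex.I := by
      have : ((n - i : ℕ) : ℂ) = (n : ℂ) - i := by
        push_cast [Nat.cast_sub hi]; ring
      push_cast [this]; field_simp; ring
    rw [hω_pow, hω_pow, e1, e2, Complex.exp_add]
    have : Complex.exp ((j : ℂ) * (2 * π * Complex.I)) = 1 := by
      have : ((j : ℂ)) * (2 * π * Complex.I) = (j : ℕ) * (2 * π * Complex.I) := by norm_num
      rw [this, Complex.exp_nat_mul, Complex.exp_two_pi_mul_I, one_pow]
    rw [this, one_mul]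
    rw [Complex.ofReal_cos]
    rw [← Complex.two_cos]
  -- rewrite LHS as a range sum
  have hLHS : ∑ m : Fin n, ((cycDist n 0 m : ℂ)) ^ 2 * ω ^ (j * (m : ℕ)) =
      ∑ m ∈ Finset.range n, ((min m (n - m) : ℕ) : ℂ) ^ 2 * ω ^ (j * m) := by
    rw [← Fin.sum_univ_eq_sum_range (fun m => ((min m (n - m) : ℕ) : ℂ) ^ 2 * ω ^ (j * m))]
    exact Finset.sum_congr rfl fun m _ => by rw [cycDist_zero]
  rw [hLHS]
  -- split the range sum
  have hsplit : ∑ m ∈ Finset.range n, ((min m (n - m) : ℕ) : ℂ) ^ 2 * ω ^ (j * m) =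
      (∑ m ∈ Finset.Ico 1 h, ((m : ℕ) : ℂ) ^ 2 * (ω ^ (j * m) + ω ^ (j * (n - m))))
        + ((h : ℕ) : ℂ) ^ 2 * ω ^ (j * h) := by
    have h1 : Finset.range n = Finset.range (h + 1) ∪ Finset.Ico (h + 1) n := by
      rw [Finset.range_eq_Ico, Finset.range_eq_Ico]
      exact (Finset.Ico_union_Ico_eq_Ico (a := 0) (b := h + 1) (c := n) (by omega) (by omega)).symm
    rw [h1, Finset.sum_union (by
      rw [Finset.range_eq_Ico]; exact Finset.Ico_disjoint_Ico_consecutive 0 (h+1) n)]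
    rw [Finset.sum_range_succ]
    have hmin_h : min h (n - h) = h := by omega
    have e1 : ∑ m ∈ Finset.range h, ((min m (n - m) : ℕ) : ℂ) ^ 2 * ω ^ (j * m) =
        ∑ m ∈ Finset.Ico 1 h, ((m : ℕ) : ℂ) ^ 2 * ω ^ (j * m) := by
      rw [Finset.range_eq_Ico, Finset.sum_eq_sum_Ico_succ_bot (by omega : 0 < h)]
      have h0 : ((min 0 (n - 0) : ℕ) : ℂ) ^ 2 * ω ^ (j * 0) = 0 := by norm_num
      rw [h0, zero_add]
      refine Finset.sum_congr rfl fun m hm => ?_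
      have hm' := Finset.mem_Ico.mp hm
      have hmm : min m (n - m) = m := by omega
      rw [hmm]
    have e2 : ∑ m ∈ Finset.Ico (h + 1) n, ((min m (n - m) : ℕ) : ℂ) ^ 2 * ω ^ (j * m) =
        ∑ m ∈ Finset.Ico 1 h, ((m : ℕ) : ℂ) ^ 2 * ω ^ (j * (n - m)) := by
      refine Finset.sum_nbij' (fun m => n - m) (fun m => n - m) ?_ ?_ ?_ ?_ ?_
      · intro a ha; simp only [Finset.mem_Ico] at ha ⊢; omega
      · intro a ha; simp only [Finset.mem_Ico] at ha ⊢; omega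
      · intro a ha; simp only [Finset.mem_Ico] at ha; show n - (n - a) = a; omega
      · intro a ha; simp only [Finset.mem_Ico] at ha; show n - (n - a) = a; omega
      · intro a ha; simp only [Finset.mem_Ico] at ha
        show _ = ((n - a : ℕ) : ℂ) ^ 2 * ω ^ (j * (n - (n - a)))
        have h3 : min a (n - a) = n - a := by omega
        have h4 : n - (n - a) = a := by omega
        rw [h3, h4]
    rw [e1, e2, hmin_h, add_right_comm]
    congr 1
    rw [← Finset.sum_add_distrib]
    exact Finset.sum_congr rfl fun m _ => by ring
  rw [hsplit]
  -- compute ω ^ (j * h)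
  have hωjh : ω ^ (j * h) = ((-1 : ℂ)) ^ j := by
    rw [mul_comm, pow_mul, hω_h]
  rw [hωjh]
  -- rewrite each pair term using cosine
  have hterms : ∑ m ∈ Finset.Ico 1 h, ((m : ℕ) : ℂ) ^ 2 * (ω ^ (j * m) + ω ^ (j * (n - m))) =
      ∑ m ∈ Finset.Ico 1 h, ((m : ℕ) : ℂ) ^ 2 * (2 * ((Real.cos (2 * π * j * m / n) : ℝ) : ℂ)) := by
    refine Finset.sum_congr rfl fun m hm => ?_
    have hm' := Finset.mem_Ico.mp hm
    rw [hpair m (by omega)]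
  rw [hterms]
  -- now compute the RHS
  have hIcc : Finset.Icc 1 (n / 2 - 1) = Finset.Ico 1 h := by
    have : n / 2 = h := by omega
    rw [this, ← Finset.Ico_add_one_right_eq_Icc]
    congr 1
    omega
  rw [hIcc]
  have hcos : ∀ m : ℕ, Real.cos (((n : ℝ) - 2 * m) * π * j / n) =
      (-1 : ℝ) ^ j * Real.cos (2 * π * j * m / n) := by
    intro m
    have harg : ((n : ℝ) - 2 * m) * π * j / n = (j : ℝ) * π - 2 * π * j * m / n := by
      field_simp
    rw [harg, Real.cos_nat_mul_pi_sub]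
  have hsqR : (-1 : ℝ) ^ j * (-1 : ℝ) ^ j = 1 := by
    rw [← pow_add]; exact Even.neg_one_pow ⟨j, rfl⟩
  have hnR2 : (n : ℝ) = 2 * h := by rw [hn2]; push_cast; ring
  have hreal : 2 * (-1 : ℝ) ^ j * ((n : ℝ) ^ 2 / 8 +
        ∑ i ∈ Finset.Ico 1 h, (i : ℝ) ^ 2 * Real.cos (((n : ℝ) - 2 * i) * π * j / n)) =
      (h : ℝ) ^ 2 * (-1 : ℝ) ^ j +
        ∑ m ∈ Finset.Ico 1 h, (m : ℝ) ^ 2 * (2 * Real.cos (2 * π * j * m / n)) := by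
    simp only [hcos]
    rw [mul_add, Finset.mul_sum]
    congr 1
    · rw [hnR2]; ring
    · refine Finset.sum_congr rfl fun m _ => ?_
      calc 2 * (-1 : ℝ) ^ j * ((m : ℝ) ^ 2 * ((-1 : ℝ) ^ j * Real.cos (2 * π * j * m / n)))
          = (m : ℝ) ^ 2 * (2 * Real.cos (2 * π * j * m / n)) * ((-1 : ℝ) ^ j * (-1 : ℝ) ^ j) := by
            ring
        _ = (m : ℝ) ^ 2 * (2 * Real.cos (2 * π * j * m / n)) := by rw [hsqR, mul_one]
  rw [hreal]
  push_cast
  ring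

open Real in
/-- eigenvalues of the distance squared matrix of an even cycle. -/
theorem stmt8 {n : ℕ} (hn : 4 ≤ n) (heven : Even n)
    (v : ℕ → Fin n → ℂ)
    (hv : ∀ j k, v j k = Complex.exp (2 * (π : ℂ) * Complex.I / n) ^ (j * (k : ℕ)))
    (lam : ℕ → ℝ)
    (hlam : ∀ j, lam j = 2 * (-1) ^ j *
      ((n : ℝ) ^ 2 / 8 +
        ∑ i ∈ Finset.Icc 1 (n / 2 - 1),
          (i : ℝ) ^ 2 * Real.cos (((n : ℝ) - 2 * i) * π * j / n))) :
    (∀ j : ℕ, 1 ≤ j → j ≤ n →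
      (cycleDistSqC n).mulVec (v j) = (lam j : ℂ) • v j) ∧
    spectrum ℂ (cycleDistSqC n) = {z : ℂ | ∃ j : ℕ, 1 ≤ j ∧ j ≤ n ∧ z = (lam j : ℂ)} := by

  haveI : NeZero n := ⟨by omega⟩
  set ω : ℂ := Complex.exp (2 * (π : ℂ) * Complex.I / n) with hωdef
  have hnC : (n : ℂ) ≠ 0 := Nat.cast_ne_zero.mpr (by omega)
  have hω_n : ω ^ n = 1 := by
    rw [← Complex.exp_nat_mul]
    have : (n : ℂ) * (2 * (π : ℂ) * Complex.I / n) = 2 * π * Complex.I := by field_simp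
    rw [this, Complex.exp_two_pi_mul_I]
  -- cast of lam as the basic exponential sum
  have hlam_cast : ∀ j : ℕ, ((lam j : ℝ) : ℂ) =
      ∑ m : Fin n, ((cycDist n 0 m : ℂ)) ^ 2 * ω ^ (j * (m : ℕ)) := by
    intro j
    rw [hlam j]
    exact (key_sum hn heven j).symm
  -- the eigenvalue equation, valid for every j
  have heig : ∀ j : ℕ, (cycleDistSqC n).mulVec (v j) = ((lam j : ℝ) : ℂ) • v j := by
    intro j
    funext i
    have hζn : (ω ^ j) ^ n = 1 := by rw [← pow_mul, mul_comm, pow_mul, hω_n, one_pow]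
    have hmod : ∀ a : ℕ, (ω ^ j) ^ (a % n) = (ω ^ j) ^ a := by
      intro a
      conv_rhs => rw [← Nat.div_add_mod a n]
      rw [pow_add, pow_mul, hζn, one_pow, one_mul]
    have step1 : (cycleDistSqC n).mulVec (v j) i =
        ∑ k : Fin n, ((cycDist n 0 (k - i) : ℂ)) ^ 2 * (ω ^ j) ^ ((k : ℕ)) := by
      simp only [Matrix.mulVec, dotProduct, cycleDistSqC, Matrix.of_apply, hv]
      refine Finset.sum_congr rfl fun k _ => ?_
      rw [cycDist_shift i k, pow_mul]
    have step2 : ∑ k : Fin n, ((cycDist n 0 (k - i) : ℂ)) ^ 2 * (ω ^ j) ^ ((k : ℕ)) =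
        ∑ m : Fin n, ((cycDist n 0 m : ℂ)) ^ 2 * (ω ^ j) ^ (((m + i : Fin n) : ℕ)) := by
      refine Fintype.sum_equiv (Equiv.subRight i) _ _ fun k => ?_
      simp only [Equiv.subRight_apply]
      rw [sub_add_cancel]
    have step3 : ∀ m : Fin n, (ω ^ j) ^ (((m + i : Fin n) : ℕ)) =
        (ω ^ j) ^ ((m : ℕ)) * (ω ^ j) ^ ((i : ℕ)) := by
      intro m
      rw [Fin.val_add, hmod, pow_add]
    have step4 : ∑ m : Fin n, ((cycDist n 0 m : ℂ)) ^ 2 * (ω ^ j) ^ (((m + i : Fin n) : ℕ)) =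
        (∑ m : Fin n, ((cycDist n 0 m : ℂ)) ^ 2 * (ω ^ j) ^ ((m : ℕ))) * (ω ^ j) ^ ((i : ℕ)) := by
      rw [Finset.sum_mul]
      exact Finset.sum_congr rfl fun m _ => by rw [step3 m]; ring
    rw [step1, step2, step4]
    have step5 : ∑ m : Fin n, ((cycDist n 0 m : ℂ)) ^ 2 * (ω ^ j) ^ ((m : ℕ)) = ((lam j : ℝ) : ℂ) := by
      rw [hlam_cast j]
      exact Finset.sum_congr rfl fun m _ => by rw [pow_mul]
    rw [step5]
    simp only [Pi.smul_apply, smul_eq_mul, hv]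
    rw [pow_mul]
  refine ⟨fun j _ _ => heig j, ?_⟩
  -- spectrum computation
  have hprim : IsPrimitiveRoot ω n := Complex.isPrimitiveRoot_exp n (by omega)
  have hinj : Function.Injective (fun a : Fin n => ω ^ (a : ℕ)) := by
    intro a b hab
    exact Fin.ext (hprim.pow_inj a.isLt b.isLt hab)
  set w : Fin n → ℂ := fun a => ω ^ (a : ℕ) with hw
  have hdet : IsUnit ((Matrix.vandermonde w)ᵀ).det := by
    rw [Matrix.det_transpose]
    exact (Matrix.det_vandermonde_ne_zero_iff.mpr hinj).isUnit
  obtain ⟨u, hu⟩ := (Matrix.isUnit_iff_isUnit_det _).mpr hdet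
  have hPD : cycleDistSqC n * (Matrix.vandermonde w)ᵀ =
      (Matrix.vandermonde w)ᵀ * Matrix.diagonal (fun a : Fin n => ((lam (a : ℕ) : ℝ) : ℂ)) := by
    ext i a
    rw [Matrix.mul_diagonal]
    have h1 : ∀ k : Fin n, (Matrix.vandermonde w)ᵀ k a = v (a : ℕ) k := by
      intro k
      rw [Matrix.transpose_apply, Matrix.vandermonde_apply, hv, hw, ← pow_mul]
    have h2 := congrFun (heig (a : ℕ)) i
    simp only [Matrix.mulVec, dotProduct, Pi.smul_apply, smul_eq_mul] at h2
    rw [Matrix.mul_apply]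
    calc ∑ k : Fin n, cycleDistSqC n i k * (Matrix.vandermonde w)ᵀ k a
        = ∑ k : Fin n, cycleDistSqC n i k * v (a : ℕ) k := by
          exact Finset.sum_congr rfl fun k _ => by rw [h1]
      _ = ((lam (a : ℕ) : ℝ) : ℂ) * v (a : ℕ) i := h2
      _ = (Matrix.vandermonde w)ᵀ i a * ((lam (a : ℕ) : ℝ) : ℂ) := by rw [h1 i]; ring
  have hconj : cycleDistSqC n =
      (↑u : Matrix (Fin n) (Fin n) ℂ) * Matrix.diagonal (fun a : Fin n => ((lam (a : ℕ) : ℝ) : ℂ)) *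
        (↑u⁻¹ : Matrix (Fin n) (Fin n) ℂ) := by
    rw [← hu] at hPD
    calc cycleDistSqC n
        = cycleDistSqC n * ((↑u : Matrix (Fin n) (Fin n) ℂ) * ↑u⁻¹) := by
          rw [Units.mul_inv, mul_one]
      _ = (cycleDistSqC n * ↑u) * ↑u⁻¹ := by rw [mul_assoc]
      _ = ((↑u : Matrix (Fin n) (Fin n) ℂ) *
            Matrix.diagonal (fun a : Fin n => ((lam (a : ℕ) : ℝ) : ℂ))) * ↑u⁻¹ := by rw [hPD]
  rw [hconj, spectrum.units_conjugate, spectrum_diagonal]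
  have hlamn : ((lam n : ℝ) : ℂ) = ((lam 0 : ℝ) : ℂ) := by
    rw [hlam_cast, hlam_cast]
    refine Finset.sum_congr rfl fun m _ => ?_
    rw [pow_mul, hω_n, one_pow, Nat.zero_mul, pow_zero]
  ext z
  simp only [Set.mem_range, Set.mem_setOf_eq]
  constructor
  · rintro ⟨a, rfl⟩
    by_cases ha : (a : ℕ) = 0
    · exact ⟨n, by omega, le_refl n, by rw [ha, ← hlamn]⟩
    · exact ⟨(a : ℕ), by omega, le_of_lt a.isLt, rfl⟩
  · rintro ⟨j, hj1, hjn, rfl⟩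
    by_cases hj : j = n
    · refine ⟨⟨0, by omega⟩, ?_⟩
      simpa [hj] using hlamn.symm
    · exact ⟨⟨j, by omega⟩, rfl⟩
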